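/- Let ω be an infinite word over a finite alphabet A and let k be a positive integer or infinity. If the number of k-Abelian equivalence classes of factors of ω of length n₀ is strictly less than q^{(k)}(n₀) for some n₀ ≥ 1, where q^{(k)}(n) = n+1 for n ≤ 2k−1 and q^{(k)}(n) = 2k for n ≥ 2k, then ω is ultimately periodic. -/

import Mathlib

/-- Number of occurrences of `x` as a factor of `w`. -/
def occ {A : Type*} [DecidableEq A] (w x : List A) : ℕ :=
  ((List.range (w.length + 1)).filter (fun i => decide (x <+: w.drop i))).length

/-- `k`-Abelian equivalence, for `k` a positive integer or `∞`. -/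
def KAbEqE {A : Type*} [DecidableEq A] (k : ℕ∞) (u v : List A) : Prop :=
  ∀ x : List A, x ≠ [] → (x.length : ℕ∞) ≤ k → occ u x = occ v x

/-- `u` is a factor of the infinite word `ω`. -/
def IsFactorOf {A : Type*} (u : List A) (ω : ℕ → A) : Prop :=
  ∃ i : ℕ, u = (List.range u.length).map fun j => ω (i + j)

/-- `ω` is ultimately periodic. -/
def UltimatelyPeriodic {A : Type*} (ω : ℕ → A) : Prop :=
  ∃ p : ℕ, 1 ≤ p ∧ ∃ N : ℕ, ∀ i ≥ N, ω (i + p) = ω i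

/-- The setoid of `k`-Abelian equivalence on the factors of `ω` of length `n`. -/
def factorSetoidE {A : Type*} [DecidableEq A] (ω : ℕ → A) (k : ℕ∞) (n : ℕ) :
    Setoid {u : List A // u.length = n ∧ IsFactorOf u ω} where
  r u v := KAbEqE k u.1 v.1
  iseqv := ⟨fun _ _ _ _ => rfl, fun h x hx hxk => (h x hx hxk).symm,
    fun h₁ h₂ x hx hxk => (h₁ x hx hxk).trans (h₂ x hx hxk)⟩

/-- The `k`-Abelian complexity of `ω`. -/
noncomputable def kabComplexityE {A : Type*} [DecidableEq A] (ω : ℕ → A) (k : ℕ∞) (n : ℕ) : ℕ :=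
  Nat.card (Quotient (factorSetoidE ω k n))

/-- The auxiliary function `q⁽ᵏ⁾`: `n + 1` for `n ≤ 2k - 1` and `2k` for `n ≥ 2k`. -/
noncomputable def qAux (k : ℕ∞) (n : ℕ) : ℕ :=
  if (n : ℕ∞) < 2 * k then n + 1 else (2 * k).toNat


set_option linter.unusedSectionVars false

namespace Stmt13

theorem ite_split {P Q R : Prop} [Decidable P] [Decidable Q] [Decidable R]
    (h : P ↔ Q ∨ R) (hd : ¬(Q ∧ R)) :
    (if P then 1 else 0 : ℕ) = (if Q then 1 else 0) + (if R then 1 else 0) := by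
  by_cases hq : Q <;> by_cases hr : R <;> simp_all

variable {A : Type*} [DecidableEq A]

theorem occ_eq_countP (w x : List A) :
    occ w x = (List.range (w.length + 1)).countP (fun i => decide (x <+: w.drop i)) := by
  rw [occ, List.countP_eq_length_filter]

theorem occ_nil {z : List A} (hz : z ≠ []) : occ ([] : List A) z = 0 := by
  simp [occ, List.range_succ, List.prefix_nil, hz]

theorem occ_cons (b : A) (w z : List A) :
    occ (b :: w) z = (if z <+: b :: w then 1 else 0) + occ w z := by
  rw [occ_eq_countP, occ_eq_countP]
  show (List.range (w.length + 1 + 1)).countP _ = _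
  rw [List.range_succ_eq_map, List.countP_cons]
  have h1 : List.countP (fun i => decide (z <+: (b :: w).drop i))
      (List.map Nat.succ (List.range (w.length + 1)))
      = List.countP (fun i => decide (z <+: w.drop i)) (List.range (w.length + 1)) := by
    rw [List.countP_map]; rfl
  rw [h1]
  have h2 : (decide (z <+: (b :: w).drop 0) : Bool) = decide (z <+: b :: w) := rfl
  rw [h2]
  by_cases h : z <+: b :: w <;> simp [h] <;> omega

theorem occ_zero_of_length {w z : List A} (h : w.length < z.length) : occ w z = 0 := by
  rw [occ_eq_countP, List.countP_eq_zero]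
  intro i _
  simp only [decide_eq_true_eq]
  intro hpre
  have := hpre.length_le
  have : (w.drop i).length = w.length - i := List.length_drop
  omega

omit [DecidableEq A] in
theorem prefix_snoc_iff {z w : List A} {b : A} : z <+: w ++ [b] ↔ z <+: w ∨ z = w ++ [b] := by
  constructor
  · intro h
    by_cases hl : z.length ≤ w.length
    · left
      have h1 := List.prefix_iff_eq_take.mp h
      rw [List.take_append_of_le_length hl] at h1
      rw [h1]
      exact List.take_prefix _ _
    · right
      apply h.eq_of_length
      have := h.length_le
      simp at this ⊢
      omega
  · rintro (h | rfl)
    · exact h.trans (List.prefix_append _ _)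
    · exact List.prefix_refl _

omit [DecidableEq A] in
theorem suffix_singleton_iff {z : List A} {b : A} (hz : z ≠ []) : z <:+ [b] ↔ z = [b] := by
  rw [List.suffix_cons_iff]
  simp [List.suffix_nil, hz]

omit [DecidableEq A] in
theorem prefix_singleton_iff {z : List A} {b : A} (hz : z ≠ []) : z <+: [b] ↔ z = [b] := by
  rw [show ([b] : List A) = [] ++ [b] from rfl, prefix_snoc_iff, List.prefix_nil]
  simp [hz]

theorem occ_concat (b : A) (w : List A) {z : List A} (hz : z ≠ []) :
    occ (w ++ [b]) z = occ w z + (if z <:+ w ++ [b] then 1 else 0) := by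
  induction w with
  | nil =>
    simp only [List.nil_append]
    rw [occ_cons, occ_nil hz]
    simp only [prefix_singleton_iff hz, suffix_singleton_iff hz]
    omega
  | cons c w' ih =>
    have hW : (c :: w') ++ [b] = c :: (w' ++ [b]) := rfl
    rw [hW, occ_cons, ih, occ_cons]
    have hpre : (if z <+: c :: (w' ++ [b]) then 1 else 0 : ℕ) =
        (if z <+: c :: w' then 1 else 0) + (if z = c :: (w' ++ [b]) then 1 else 0) := by
      apply ite_split
      · rw [← hW]; exact prefix_snoc_iff
      · rintro ⟨h1, rfl⟩
        have := h1.length_le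
        simp at this
    have hsuf : (if z <:+ c :: (w' ++ [b]) then 1 else 0 : ℕ) =
        (if z <:+ w' ++ [b] then 1 else 0) + (if z = c :: (w' ++ [b]) then 1 else 0) := by
      apply ite_split
      · rw [List.suffix_cons_iff]; tauto
      · rintro ⟨h1, rfl⟩
        have := h1.length_le
        simp at this
    rw [hpre, hsuf]
    omega


omit [DecidableEq A] in
theorem snoc_suffix_snoc {z w : List A} {a b : A} :
    z ++ [a] <:+ w ++ [b] ↔ a = b ∧ z <:+ w := by
  rw [← List.reverse_prefix]
  simp only [List.reverse_append, List.reverse_cons, List.reverse_nil, List.nil_append,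
    List.singleton_append]
  rw [List.cons_prefix_cons, List.reverse_prefix]

omit [DecidableEq A] in
theorem singleton_suffix_snoc {z : List A} {c b : A} : [c] <:+ z ++ [b] ↔ c = b := by
  have := @snoc_suffix_snoc A [] z c b
  simpa using this

section fin
variable [Fintype A]

theorem occ_prefix_ident (u : List A) {z : List A} (hz : z ≠ []) :
    occ u z = (∑ a : A, occ u (a :: z)) + (if z <+: u then 1 else 0) := by
  induction u with
  | nil =>
    rw [occ_nil hz]
    simp [occ_nil, List.prefix_nil, hz]
  | cons b w ih =>
    rw [occ_cons b w z, ih]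
    have hsum : ∀ a : A, occ (b :: w) (a :: z) =
        (if a = b ∧ z <+: w then 1 else 0) + occ w (a :: z) := by
      intro a
      rw [occ_cons b w (a :: z)]
      congr 1
      simp [List.cons_prefix_cons]
    rw [Finset.sum_congr rfl (fun a _ => hsum a), Finset.sum_add_distrib]
    have h2 : (∑ a : A, if a = b ∧ z <+: w then 1 else 0 : ℕ) = if z <+: w then 1 else 0 := by
      by_cases hzw : z <+: w
      · simp [hzw]
      · simp [hzw]
    rw [h2]
    omega

theorem occ_suffix_ident (u : List A) {z : List A} (hz : z ≠ []) :
    occ u z = (∑ a : A, occ u (z ++ [a])) + (if z <:+ u then 1 else 0) := by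
  induction u using List.reverseRecOn with
  | nil =>
    rw [occ_nil hz]
    simp [occ_nil, List.suffix_nil, hz]
  | append_singleton w b ih =>
    rw [occ_concat b w hz, ih]
    have hsum : ∀ a : A, occ (w ++ [b]) (z ++ [a]) =
        occ w (z ++ [a]) + (if a = b ∧ z <:+ w then 1 else 0) := by
      intro a
      rw [occ_concat b w (by simp : z ++ [a] ≠ [])]
      congr 1
      simp [snoc_suffix_snoc]
    rw [Finset.sum_congr rfl (fun a _ => hsum a), Finset.sum_add_distrib]
    have h2 : (∑ a : A, if a = b ∧ z <:+ w then 1 else 0 : ℕ) = if z <:+ w then 1 else 0 := by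
      by_cases hzw : z <:+ w
      · simp [hzw]
      · simp [hzw]
    rw [h2]
    try omega

variable {k : ℕ∞} {u v : List A}

theorem kab_occ (h : KAbEqE k u v) {z : List A} (hz : z ≠ []) (hk : (z.length : ℕ∞) ≤ k) :
    occ u z = occ v z := h z hz hk

theorem kab_prefix_iff (h : KAbEqE k u v) {z : List A} (hz : z ≠ [])
    (hk : (z.length : ℕ∞) + 1 ≤ k) : (z <+: u ↔ z <+: v) := by
  have hzk : (z.length : ℕ∞) ≤ k := le_trans (by exact le_self_add) hk
  have e1 := occ_prefix_ident u hz
  have e2 := occ_prefix_ident v hz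
  have hS : (∑ a : A, occ u (a :: z)) = ∑ a : A, occ v (a :: z) := by
    apply Finset.sum_congr rfl
    intro a _
    apply h _ (by simp)
    have : ((a :: z).length : ℕ∞) = (z.length : ℕ∞) + 1 := by
      simp [List.length_cons]
    rw [this]; exact hk
  have hocc := h z hz hzk
  have : (if z <+: u then 1 else 0 : ℕ) = (if z <+: v then 1 else 0) := by omega
  by_cases h1 : z <+: u <;> by_cases h2 : z <+: v <;> simp_all

theorem kab_suffix_iff (h : KAbEqE k u v) {z : List A} (hz : z ≠ [])
    (hk : (z.length : ℕ∞) + 1 ≤ k) : (z <:+ u ↔ z <:+ v) := by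
  have hzk : (z.length : ℕ∞) ≤ k := le_trans (by exact le_self_add) hk
  have e1 := occ_suffix_ident u hz
  have e2 := occ_suffix_ident v hz
  have hS : (∑ a : A, occ u (z ++ [a])) = ∑ a : A, occ v (z ++ [a]) := by
    apply Finset.sum_congr rfl
    intro a _
    apply h _ (by simp)
    have : ((z ++ [a]).length : ℕ∞) = (z.length : ℕ∞) + 1 := by
      simp [List.length_append]
    rw [this]; exact hk
  have hocc := h z hz hzk
  have : (if z <:+ u then 1 else 0 : ℕ) = (if z <:+ v then 1 else 0) := by omega
  by_cases h1 : z <:+ u <;> by_cases h2 : z <:+ v <;> simp_all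

theorem kab_head_eq (h : KAbEqE k u v) (hk : 2 ≤ k) (hu : u ≠ []) (hv : v ≠ []) :
    u.head? = v.head? := by
  obtain ⟨a, u', rfl⟩ := List.exists_cons_of_ne_nil hu
  obtain ⟨b, v', rfl⟩ := List.exists_cons_of_ne_nil hv
  have h1 : [a] <+: a :: u' := ⟨u', rfl⟩
  have h2 : [a] <+: b :: v' := by
    rw [← kab_prefix_iff h (by simp) (by
      simp only [List.length_singleton, Nat.cast_one]
      exact hk)]
    exact h1
  rcases List.cons_prefix_cons.mp h2 with ⟨rfl, -⟩
  rfl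

theorem kab_ne_of_last_ne {w : List A} {x y : A} (hxy : x ≠ y) (hk : 2 ≤ k) :
    ¬ KAbEqE k (w ++ [x]) (w ++ [y]) := by
  intro h
  have h1 : [x] <:+ w ++ [x] := ⟨w, rfl⟩
  have h2 : [x] <:+ w ++ [y] := by
    rw [← kab_suffix_iff h (by simp) (by
      simp only [List.length_singleton, Nat.cast_one]
      exact hk)]
    exact h1
  exact hxy (singleton_suffix_snoc.mp h2)

theorem kab_ne_of_head_ne {w : List A} {x y : A} (hxy : x ≠ y) (hk : 2 ≤ k) :
    ¬ KAbEqE k (x :: w) (y :: w) := by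
  intro h
  have := kab_head_eq h hk (by simp) (by simp)
  simp at this
  exact hxy this

end fin

theorem kab_refl {k : ℕ∞} (u : List A) : KAbEqE k u u := fun _ _ _ => rfl

theorem kab_symm {k : ℕ∞} {u v : List A} (h : KAbEqE k u v) : KAbEqE k v u :=
  fun x hx hk => (h x hx hk).symm

theorem kab_trans {k : ℕ∞} {u v w : List A} (h1 : KAbEqE k u v) (h2 : KAbEqE k v w) :
    KAbEqE k u w := fun x hx hk => (h1 x hx hk).trans (h2 x hx hk)

theorem kab_coarse {j k : ℕ∞} (hjk : j ≤ k) {u v : List A} (h : KAbEqE k u v) : KAbEqE j u v :=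
  fun x hx hxj => h x hx (hxj.trans hjk)

omit [DecidableEq A] in
theorem suffix_tail_iff {z u : List A} (hlen : z.length < u.length) :
    z <:+ u.tail ↔ z <:+ u := by
  constructor
  · intro h; exact h.trans (List.tail_suffix u)
  · rintro ⟨t, rfl⟩
    have ht : t ≠ [] := by
      intro hh
      rw [hh] at hlen
      simp at hlen
    obtain ⟨c, t', rfl⟩ := List.exists_cons_of_ne_nil ht
    exact ⟨t', rfl⟩

theorem kab_trim [Fintype A] {k : ℕ} {n : ℕ} {u v : List A}
    (h : KAbEqE ((k + 1 : ℕ) : ℕ∞) u v) (hlu : u.length = n) (hlv : v.length = n)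
    (hn : 2 ≤ n) : KAbEqE (k : ℕ∞) u.tail.dropLast v.tail.dropLast := by
  intro z hz hzk
  have hlt : (u.tail.dropLast).length = n - 2 := by
    simp [List.length_dropLast, List.length_tail, hlu]; omega
  have hlt' : (v.tail.dropLast).length = n - 2 := by
    simp [List.length_dropLast, List.length_tail, hlv]; omega
  by_cases hbig : n - 2 < z.length
  · rw [occ_zero_of_length (by omega : (u.tail.dropLast).length < z.length),
      occ_zero_of_length (by omega : (v.tail.dropLast).length < z.length)]
  · push_neg at hbig
    have key : ∀ w : List A, w.length = n →
        occ w z = (if z <+: w then 1 else 0) + occ w.tail.dropLast z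
          + (if z <:+ w then 1 else 0) := by
      intro w hw
      have hw_ne : w ≠ [] := by intro hh; rw [hh] at hw; simp at hw; omega
      have hwt_ne : w.tail ≠ [] := by
        intro hh
        have : w.tail.length = w.length - 1 := List.length_tail
        rw [hh] at this
        simp at this
        omega
      have e1 : occ w z = (if z <+: w then 1 else 0) + occ w.tail z := by
        conv_lhs => rw [← List.cons_head_tail hw_ne]
        rw [occ_cons (w.head hw_ne) w.tail z]
        rw [List.cons_head_tail hw_ne]
      have e2 : occ w.tail z = occ w.tail.dropLast z + (if z <:+ w.tail then 1 else 0) := by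
        conv_lhs => rw [← List.dropLast_append_getLast hwt_ne]
        rw [occ_concat (w.tail.getLast hwt_ne) w.tail.dropLast hz]
        rw [List.dropLast_append_getLast hwt_ne]
      have e3 : (z <:+ w.tail) ↔ z <:+ w := suffix_tail_iff (by omega)
      rw [e1, e2]
      have : (if z <:+ w.tail then 1 else 0 : ℕ) = (if z <:+ w then 1 else 0) := by
        by_cases hh : z <:+ w <;> simp_all
      omega
    have ku := key u hlu
    have kv := key v hlv
    have hcast : ((z.length : ℕ∞) + 1) ≤ ((k + 1 : ℕ) : ℕ∞) := by
      push_cast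
      exact add_le_add_left hzk 1
    have hocc : occ u z = occ v z := h z hz (le_trans hzk (by push_cast; exact le_self_add))
    have hpre := kab_prefix_iff h hz hcast
    have hsuf := kab_suffix_iff h hz hcast
    have i1 : (if z <+: u then 1 else 0 : ℕ) = (if z <+: v then 1 else 0) := by
      by_cases h1 : z <+: u <;> by_cases h2 : z <+: v <;> simp_all
    have i2 : (if z <:+ u then 1 else 0 : ℕ) = (if z <:+ v then 1 else 0) := by
      by_cases h1 : z <:+ u <;> by_cases h2 : z <:+ v <;> simp_all
    omega



variable (ω : ℕ → A)

section fin2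
variable [Fintype A]

/-- The window of length `m` starting at position `i`. -/
def wnd (i m : ℕ) : List A := (List.range m).map fun j => ω (i + j)

@[simp] theorem length_wnd (i m : ℕ) : (wnd ω i m).length = m := by simp [wnd]

theorem wnd_cons (i m : ℕ) : wnd ω i (m + 1) = ω i :: wnd ω (i + 1) m := by
  unfold wnd
  rw [List.range_succ_eq_map, List.map_cons, List.map_map]
  have hf : ((fun j => ω (i + j)) ∘ Nat.succ) = fun j => ω (i + 1 + j) := by
    funext j
    show ω (i + (j + 1)) = ω (i + 1 + j)
    congr 1
    omega
  rw [hf]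
  norm_num

theorem wnd_snoc (i m : ℕ) : wnd ω i (m + 1) = wnd ω i m ++ [ω (i + m)] := by
  unfold wnd
  rw [List.range_succ, List.map_append]
  rfl

/-- `u` occurs at arbitrarily large positions in `ω`. -/
def IsRec (u : List A) : Prop := ∀ N, ∃ i, N ≤ i ∧ u = wnd ω i u.length

theorem IsRec.isFactorOf {u : List A} (h : IsRec ω u) : IsFactorOf u ω := by
  obtain ⟨i, -, he⟩ := h 0
  exact ⟨i, he⟩

theorem isRec_wnd_of {i m : ℕ} (h : IsRec ω (wnd ω i m)) : True := trivial

theorem isRec_tail {u : List A} (h : IsRec ω u) : IsRec ω u.tail := by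
  rcases u with _ | ⟨a, u'⟩
  · exact h
  · intro N
    obtain ⟨i, hi, he⟩ := h N
    have hl : (a :: u').length = u'.length + 1 := rfl
    rw [hl, wnd_cons] at he
    refine ⟨i + 1, by omega, ?_⟩
    have := (List.cons.injEq _ _ _ _).mp he
    exact this.2

theorem isRec_dropLast {u : List A} (h : IsRec ω u) : IsRec ω u.dropLast := by
  induction u using List.reverseRecOn with
  | nil => exact h
  | append_singleton w b _ =>
    have hgoal : (w ++ [b]).dropLast = w := by simp
    rw [hgoal]
    intro N
    obtain ⟨i, hi, he⟩ := h N
    have hl : (w ++ [b]).length = w.length + 1 := by simp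
    rw [hl, wnd_snoc] at he
    refine ⟨i, hi, ?_⟩
    have := congrArg List.dropLast he
    simpa using this

theorem finite_len (m : ℕ) : {u : List A | u.length = m}.Finite := by
  have h := Set.finite_range (fun f : Fin m → A => List.ofFn f)
  apply h.subset
  rintro u (hu : u.length = m)
  subst hu
  exact ⟨u.get, List.ofFn_get u⟩

theorem freq_pigeon {P : ℕ → Prop} (h : ∀ N, ∃ i, N ≤ i ∧ P i) {β : Type*} [Finite β]
    (v : ℕ → β) : ∃ b, ∀ N, ∃ i, N ≤ i ∧ P i ∧ v i = b := by
  by_contra hc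
  push_neg at hc
  choose f hf using hc
  cases nonempty_fintype β
  obtain ⟨i, hi, hPi⟩ := h (Finset.univ.sup f)
  exact hf (v i) i (le_trans (Finset.le_sup (Finset.mem_univ _)) hi) hPi rfl

theorem exists_rec_tail (m : ℕ) : ∃ R, ∀ i, R ≤ i → IsRec ω (wnd ω i m) := by
  classical
  have hS : {u : List A | u.length = m ∧ ¬ IsRec ω u}.Finite :=
    (finite_len m).subset (fun u hu => hu.1)
  have hb : ∀ u : List A, ∃ N : ℕ, (u.length = m ∧ ¬ IsRec ω u) →
      ∀ i, N ≤ i → u ≠ wnd ω i u.length := by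
    intro u
    by_cases hu : u.length = m ∧ ¬ IsRec ω u
    · have := hu.2
      unfold IsRec at this
      push_neg at this
      obtain ⟨N, hN⟩ := this
      exact ⟨N, fun _ i hi => hN i hi⟩
    · exact ⟨0, fun hh => absurd hh hu⟩
  choose g hg using hb
  refine ⟨hS.toFinset.sup g, fun i hi => ?_⟩
  by_contra hrec
  have hmem : wnd ω i m ∈ hS.toFinset := by
    rw [Set.Finite.mem_toFinset]
    exact ⟨by simp, hrec⟩
  have hle : g (wnd ω i m) ≤ hS.toFinset.sup g := Finset.le_sup hmem
  exact hg (wnd ω i m) ⟨by simp, hrec⟩ i (le_trans hle hi) (by simp)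

theorem det_UP {m R : ℕ}
    (hdet : ∀ i j, R ≤ i → R ≤ j → wnd ω i m = wnd ω j m → ω (i + m) = ω (j + m)) :
    UltimatelyPeriodic ω := by
  rcases Nat.eq_zero_or_pos m with hm | hm
  · subst hm
    refine ⟨1, le_refl 1, R, fun i hi => ?_⟩
    have := hdet (i + 1) i (by omega) hi rfl
    simpa using this
  · have hfin : Finite {u : List A // u.length = m} :=
      Set.Finite.to_subtype (finite_len m)
    obtain ⟨t₁, t₂, hne, heq⟩ := Finite.exists_ne_map_eq_of_infinite
      (fun t : ℕ => (⟨wnd ω (R + t) m, by simp⟩ : {u : List A // u.length = m}))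
    have heq' : wnd ω (R + t₁) m = wnd ω (R + t₂) m := by
      simpa using congrArg Subtype.val heq
    -- wlog order
    have main : ∀ s t : ℕ, s < t → wnd ω (R + s) m = wnd ω (R + t) m →
        UltimatelyPeriodic ω := by
      intro s t hst h0
      have prop : ∀ d, wnd ω (R + s + d) m = wnd ω (R + t + d) m := by
        intro d
        induction d with
        | zero => simpa using h0
        | succ d ih =>
          have hnext := hdet (R + s + d) (R + t + d) (by omega) (by omega) ih
          have e1 : wnd ω (R + s + (d + 1)) m = (wnd ω (R + s + d) (m + 1)).tail := by
            have harg : R + s + (d + 1) = R + s + d + 1 := by omega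
            rw [harg, wnd_cons, List.tail_cons]
          have e2 : wnd ω (R + t + (d + 1)) m = (wnd ω (R + t + d) (m + 1)).tail := by
            have harg : R + t + (d + 1) = R + t + d + 1 := by omega
            rw [harg, wnd_cons, List.tail_cons]
          rw [e1, e2]
          congr 1
          rw [wnd_snoc, wnd_snoc, ih, hnext]
      have lett : ∀ d, ω (R + s + d) = ω (R + t + d) := by
        intro d
        have := prop d
        obtain ⟨m', rfl⟩ := Nat.exists_eq_succ_of_ne_zero (by omega : m ≠ 0)
        rw [wnd_cons, wnd_cons] at this
        exact ((List.cons.injEq _ _ _ _).mp this).1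
      refine ⟨t - s, by omega, R + s, fun i hi => ?_⟩
      have h1 := lett (i - (R + s))
      have e1 : R + s + (i - (R + s)) = i := by omega
      have e2 : R + t + (i - (R + s)) = i + (t - s) := by omega
      rw [e1, e2] at h1
      exact h1.symm
    rcases lt_or_gt_of_ne hne with h | h
    · exact main t₁ t₂ h heq'
    · exact main t₂ t₁ h heq'.symm

theorem exists_right_special (hUP : ¬ UltimatelyPeriodic ω) (m : ℕ) :
    ∃ (w : List A) (x y : A), x ≠ y ∧ w.length = m ∧
      IsRec ω (w ++ [x]) ∧ IsRec ω (w ++ [y]) := by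
  by_contra hc
  push_neg at hc
  obtain ⟨R, hR⟩ := exists_rec_tail ω (m + 1)
  apply hUP
  apply det_UP ω (m := m) (R := R)
  intro i j hi hj hw
  by_contra hne
  have h1 : IsRec ω (wnd ω i m ++ [ω (i + m)]) := by rw [← wnd_snoc]; exact hR i hi
  have h2 : IsRec ω (wnd ω j m ++ [ω (j + m)]) := by rw [← wnd_snoc]; exact hR j hj
  rw [← hw] at h2
  exact hc (wnd ω i m) (ω (i + m)) (ω (j + m)) hne (by simp) h1 h2


/-- If `w` is recurrent then it has a recurrent left extension. -/
theorem exists_rec_cons {w : List A} (hr : IsRec ω w) :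
    ∃ a : A, IsRec ω (a :: w) := by
  classical
  have hP : ∀ N, ∃ i, N ≤ i ∧ w = wnd ω (i + 1) w.length := by
    intro N
    obtain ⟨i, hi, he⟩ := hr (N + 1)
    refine ⟨i - 1, by omega, ?_⟩
    have : i - 1 + 1 = i := by omega
    rw [this]
    exact he
  have hfin : Finite {u : List A // u.length = w.length + 1} :=
    Set.Finite.to_subtype (finite_len (w.length + 1))
  obtain ⟨b, hb⟩ := freq_pigeon hP
    (fun i => (⟨wnd ω i (w.length + 1), by simp⟩ : {u : List A // u.length = w.length + 1}))
  obtain ⟨i0, -, hP0, hv0⟩ := hb 0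
  have hbval : b.1 = ω i0 :: w := by
    rw [← hv0]
    simp only
    rw [wnd_cons, ← hP0]
  refine ⟨ω i0, ?_⟩
  intro N
  obtain ⟨i, hi, hPi, hv⟩ := hb N
  refine ⟨i, hi, ?_⟩
  have h1 : (ω i0 :: w : List A).length = w.length + 1 := rfl
  rw [h1, ← hbval, ← hv]

/-- If `w` is recurrent then it has a recurrent right extension. -/
theorem exists_rec_snoc {w : List A} (hr : IsRec ω w) :
    ∃ a : A, IsRec ω (w ++ [a]) := by
  classical
  have hP : ∀ N, ∃ i, N ≤ i ∧ w = wnd ω i w.length := hr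
  have hfin : Finite {u : List A // u.length = w.length + 1} :=
    Set.Finite.to_subtype (finite_len (w.length + 1))
  obtain ⟨b, hb⟩ := freq_pigeon hP
    (fun i => (⟨wnd ω i (w.length + 1), by simp⟩ : {u : List A // u.length = w.length + 1}))
  obtain ⟨i0, -, hP0, hv0⟩ := hb 0
  have hbval : b.1 = w ++ [ω (i0 + w.length)] := by
    rw [← hv0]
    simp only
    rw [wnd_snoc, ← hP0]
  refine ⟨ω (i0 + w.length), ?_⟩
  intro N
  obtain ⟨i, hi, hPi, hv⟩ := hb N
  refine ⟨i, hi, ?_⟩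
  have h1 : (w ++ [ω (i0 + w.length)]).length = w.length + 1 := by simp
  rw [h1, ← hbval, ← hv]

theorem exists_left_special (hUP : ¬ UltimatelyPeriodic ω) (m : ℕ) :
    ∃ (w : List A) (x y : A), x ≠ y ∧ w.length = m ∧
      IsRec ω (x :: w) ∧ IsRec ω (y :: w) := by
  classical
  by_contra hc
  push_neg at hc
  obtain ⟨wR, x, y, hxy, hlen, hrx, hry⟩ := exists_right_special ω hUP m
  have hS0 : {u : List A | u.length = m ∧ IsRec ω u}.Finite :=
    (finite_len m).subset fun u hu => hu.1
  have hS1 : {u : List A | u.length = m + 1 ∧ IsRec ω u}.Finite :=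
    (finite_len (m + 1)).subset fun u hu => hu.1
  set F0 := hS0.toFinset with hF0
  set F1 := hS1.toFinset with hF1
  have memF0 : ∀ u : List A, u ∈ F0 ↔ u.length = m ∧ IsRec ω u := by
    intro u; rw [hF0, Set.Finite.mem_toFinset]; exact Iff.rfl
  have memF1 : ∀ u : List A, u ∈ F1 ↔ u.length = m + 1 ∧ IsRec ω u := by
    intro u; rw [hF1, Set.Finite.mem_toFinset]; exact Iff.rfl
  have hne1 : ∀ z : List A, z ∈ F1 → z ≠ [] := by
    intro z hz hnil
    have := ((memF1 z).mp hz).1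
    rw [hnil] at this
    simp at this
  have htail_mem : ∀ z ∈ F1, z.tail ∈ F0 := by
    intro z hz
    obtain ⟨hl, hr⟩ := (memF1 z).mp hz
    exact (memF0 _).mpr ⟨by simp [List.length_tail, hl], isRec_tail ω hr⟩
  have hdrop_mem : ∀ z ∈ F1, z.dropLast ∈ F0 := by
    intro z hz
    obtain ⟨hl, hr⟩ := (memF1 z).mp hz
    exact (memF0 _).mpr ⟨by simp [List.length_dropLast, hl], isRec_dropLast ω hr⟩
  have hlift_tail : ∀ w' ∈ F0, ∃ z ∈ F1, z.tail = w' := by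
    intro w' hw'
    obtain ⟨hl, hr⟩ := (memF0 w').mp hw'
    obtain ⟨a, ha⟩ := exists_rec_cons ω hr
    refine ⟨a :: w', ?_, rfl⟩
    exact (memF1 _).mpr ⟨by simp [hl], ha⟩
  have hlift_drop : ∀ w' ∈ F0, ∃ z ∈ F1, z.dropLast = w' := by
    intro w' hw'
    obtain ⟨hl, hr⟩ := (memF0 w').mp hw'
    obtain ⟨a, ha⟩ := exists_rec_snoc ω hr
    refine ⟨w' ++ [a], ?_, by simp⟩
    exact (memF1 _).mpr ⟨by simp [hl], ha⟩
  have htail_inj : Set.InjOn List.tail (F1 : Set (List A)) := by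
    intro z1 hz1 z2 hz2 he
    have hm1 : z1 ∈ F1 := hz1
    have hm2 : z2 ∈ F1 := hz2
    have h1ne : z1 ≠ [] := hne1 z1 hm1
    have h2ne : z2 ≠ [] := hne1 z2 hm2
    by_contra hne
    have hh : z1.head h1ne ≠ z2.head h2ne := by
      intro hheq
      apply hne
      rw [← List.cons_head_tail h1ne, ← List.cons_head_tail h2ne, hheq, he]
    have hr1 : IsRec ω (z1.head h1ne :: z1.tail) := by
      rw [List.cons_head_tail]
      exact ((memF1 z1).mp hm1).2
    have hr2 : IsRec ω (z2.head h2ne :: z1.tail) := by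
      rw [he, List.cons_head_tail]
      exact ((memF1 z2).mp hm2).2
    have hlt : z1.tail.length = m := by
      have := ((memF1 z1).mp hm1).1
      simp [List.length_tail, this]
    exact hc z1.tail (z1.head h1ne) (z2.head h2ne) hh hlt hr1 hr2
  have c1 : F0.card ≤ F1.card := by
    apply Finset.card_le_card_of_surjOn List.tail
    intro w' hw'
    obtain ⟨z, hz, hzt⟩ := hlift_tail w' hw'
    exact ⟨z, hz, hzt⟩
  have c2 : F1.card ≤ F0.card :=
    Finset.card_le_card_of_injOn List.tail htail_mem htail_inj
  have himg : F1.image List.dropLast = F0 := by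
    apply Finset.Subset.antisymm
    · intro u hu
      obtain ⟨z, hz, rfl⟩ := Finset.mem_image.mp hu
      exact hdrop_mem z hz
    · intro w' hw'
      obtain ⟨z, hz, hzt⟩ := hlift_drop w' hw'
      exact Finset.mem_image.mpr ⟨z, hz, hzt⟩
  have hdrop_inj : Set.InjOn List.dropLast (F1 : Set (List A)) := by
    apply Finset.injOn_of_card_image_eq
    rw [himg]
    omega
  have hm1 : wR ++ [x] ∈ F1 := (memF1 _).mpr ⟨by simp [hlen], hrx⟩
  have hm2 : wR ++ [y] ∈ F1 := (memF1 _).mpr ⟨by simp [hlen], hry⟩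
  have : wR ++ [x] = wR ++ [y] := by
    apply hdrop_inj hm1 hm2
    simp
  have : [x] = [y] := by
    exact List.append_cancel_left this
  simp at this
  exact hxy this


theorem isRec_nil : IsRec ω ([] : List A) := by
  intro N
  exact ⟨N, le_refl N, rfl⟩

theorem exists_rec_ext2 {w : List A} (hr : IsRec ω w) :
    ∃ u : List A, IsRec ω u ∧ u.length = w.length + 2 ∧ u.tail.dropLast = w := by
  obtain ⟨a, ha⟩ := exists_rec_cons ω hr
  obtain ⟨b, hb⟩ := exists_rec_snoc ω ha
  refine ⟨(a :: w) ++ [b], hb, by simp, ?_⟩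
  have : ((a :: w) ++ [b]).tail = w ++ [b] := rfl
  rw [this, List.dropLast_concat]

theorem abelian_pair (hUP : ¬ UltimatelyPeriodic ω) {n : ℕ} (hn : 1 ≤ n) :
    ∃ u v : List A, u.length = n ∧ v.length = n ∧ IsRec ω u ∧ IsRec ω v ∧
      ¬ KAbEqE (1 : ℕ∞) u v := by
  by_contra hcon
  push_neg at hcon
  obtain ⟨R, hR⟩ := exists_rec_tail ω n
  apply hUP
  refine ⟨n, hn, R, fun i hi => ?_⟩
  have h1 : IsRec ω (wnd ω i n) := hR i hi
  have h2 : IsRec ω (wnd ω (i + 1) n) := hR (i + 1) (by omega)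
  have heq : KAbEqE (1 : ℕ∞) (wnd ω i n) (wnd ω (i + 1) n) :=
    hcon _ _ (length_wnd ω i n) (length_wnd ω (i + 1) n) h1 h2
  have key : ∀ a : A, (if a = ω i then 1 else 0 : ℕ) = (if a = ω (i + n) then 1 else 0) := by
    intro a
    have hocc : occ (wnd ω i n) [a] = occ (wnd ω (i + 1) n) [a] :=
      heq [a] (by simp) (by simp)
    have e1 : occ (wnd ω i (n + 1)) [a]
        = (if a = ω i then 1 else 0) + occ (wnd ω (i + 1) n) [a] := by
      rw [wnd_cons ω i n, occ_cons (ω i) (wnd ω (i + 1) n) [a]]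
      congr 1
      have : ([a] <+: ω i :: wnd ω (i + 1) n) ↔ a = ω i := by
        rw [List.cons_prefix_cons]
        simp
      by_cases hh : a = ω i <;> simp_all
    have e2 : occ (wnd ω i (n + 1)) [a]
        = occ (wnd ω i n) [a] + (if a = ω (i + n) then 1 else 0) := by
      rw [wnd_snoc ω i n,
        occ_concat (ω (i + n)) (wnd ω i n) (show ([a] : List A) ≠ [] by simp)]
      congr 1
      have := @singleton_suffix_snoc A (wnd ω i n) a (ω (i + n))
      by_cases hh : a = ω (i + n) <;> simp_all
    omega
  have := key (ω i)
  simp at this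
  by_cases hh : ω i = ω (i + n)
  · exact hh.symm
  · simp [hh] at this




def Spread (k n c : ℕ) : Prop :=
  ∃ L : Finset (List A), L.card = c ∧ (∀ u ∈ L, u.length = n ∧ IsRec ω u) ∧
    (∀ u ∈ L, ∀ v ∈ L, u ≠ v → ¬ KAbEqE (k : ℕ∞) u v)

theorem spread_zero (k : ℕ) : Spread ω k 0 1 := by
  refine ⟨{([] : List A)}, by simp, ?_, ?_⟩
  · intro u hu
    simp only [Finset.mem_singleton] at hu
    subst hu
    exact ⟨rfl, isRec_nil ω⟩
  · intro u hu v hv huv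
    simp only [Finset.mem_singleton] at hu hv
    subst hu; subst hv; exact absurd rfl huv

theorem spread_two {k n : ℕ} {u v : List A} (hu : u.length = n) (hv : v.length = n)
    (hru : IsRec ω u) (hrv : IsRec ω v) (hne : ¬ KAbEqE (k : ℕ∞) u v) : Spread ω k n 2 := by
  have huv : u ≠ v := by rintro rfl; exact hne (fun _ _ _ => rfl)
  refine ⟨{u, v}, ?_, ?_, ?_⟩
  · rw [Finset.card_insert_of_notMem (by simp [huv]), Finset.card_singleton]
  · intro w hw
    rcases Finset.mem_insert.mp hw with rfl | hw
    · exact ⟨hu, hru⟩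
    · rw [Finset.mem_singleton] at hw
      subst hw
      exact ⟨hv, hrv⟩
  · intro a ha b hb hab
    rcases Finset.mem_insert.mp ha with rfl | ha
    · rcases Finset.mem_insert.mp hb with rfl | hb
      · exact absurd rfl hab
      · rw [Finset.mem_singleton] at hb
        subst hb
        exact hne
    · rw [Finset.mem_singleton] at ha
      subst ha
      rcases Finset.mem_insert.mp hb with rfl | hb
      · exact fun h => hne (kab_symm h)
      · rw [Finset.mem_singleton] at hb
        subst hb
        exact absurd rfl hab

theorem spread_one (hUP : ¬ UltimatelyPeriodic ω) {k : ℕ} (hk : 1 ≤ k) : Spread ω k 1 2 := by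
  obtain ⟨w, x, y, hxy, hlen, hx, hy⟩ := exists_right_special ω hUP 0
  have hw : w = [] := List.length_eq_zero_iff.mp hlen
  subst hw
  simp only [List.nil_append] at hx hy
  apply spread_two ω (u := [x]) (v := [y]) rfl rfl hx hy
  intro h
  have h1 := h [x] (by simp) (by
    simp only [List.length_singleton, Nat.cast_one]
    exact_mod_cast hk)
  rw [occ_cons, occ_cons, occ_nil (by simp)] at h1
  have hxx : ([x] : List A) <+: [x] := List.prefix_refl _
  have hxy' : ¬ ([x] : List A) <+: [y] := by
    rw [prefix_singleton_iff (by simp)]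
    simp [hxy]
  simp [hxx, hxy'] at h1

theorem spread_step (hUP : ¬ UltimatelyPeriodic ω) {k n c : ℕ} (hk : 1 ≤ k)
    (hsp : Spread ω k n c) : Spread ω (k + 1) (n + 2) (c + 2) := by
  classical
  obtain ⟨L, hcard, hmem, hpw⟩ := hsp
  have hK2 : (2 : ℕ∞) ≤ ((k + 1 : ℕ) : ℕ∞) := by exact_mod_cast (by omega : 2 ≤ k + 1)
  -- extension function
  have hext : ∀ w : List A, ∃ u : List A,
      (w ∈ L → IsRec ω u ∧ u.length = n + 2 ∧ u.tail.dropLast = w) := by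
    intro w
    by_cases hw : w ∈ L
    · obtain ⟨u, h1, h2, h3⟩ := exists_rec_ext2 ω ((hmem w hw).2)
      exact ⟨u, fun _ => ⟨h1, by rw [h2, (hmem w hw).1], h3⟩⟩
    · exact ⟨[], fun hh => absurd hh hw⟩
  choose E hE using hext
  have hErec : ∀ w ∈ L, IsRec ω (E w) := fun w hw => (hE w hw).1
  have hElen : ∀ w ∈ L, (E w).length = n + 2 := fun w hw => (hE w hw).2.1
  have hEtrim : ∀ w ∈ L, (E w).tail.dropLast = w := fun w hw => (hE w hw).2.2
  set L' := L.image E with hL'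
  have hcard' : L'.card = c := by
    rw [hL', Finset.card_image_of_injOn, hcard]
    intro w1 h1 w2 h2 he
    rw [← hEtrim w1 h1, ← hEtrim w2 h2, he]
  -- specials
  obtain ⟨wL, x1, y1, hxy1, hlenL, hrx1, hry1⟩ := exists_left_special ω hUP (n + 1)
  obtain ⟨wR, x2, y2, hxy2, hlenR, hrx2, hry2⟩ := exists_right_special ω hUP (n + 1)
  set u := x1 :: wL with hu_def
  set v := y1 :: wL with hv_def
  set u'' := wR ++ [x2] with hu2_def
  set v'' := wR ++ [y2] with hv2_def
  have hulen : u.length = n + 2 := by simp [hu_def, hlenL]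
  have hvlen : v.length = n + 2 := by simp [hv_def, hlenL]
  have hu2len : u''.length = n + 2 := by simp [hu2_def, hlenR]
  have hv2len : v''.length = n + 2 := by simp [hv2_def, hlenR]
  have hwRne : wR ≠ [] := by
    intro hh; rw [hh] at hlenR; simp at hlenR
  have htrim_u : u.tail.dropLast = wL.dropLast := rfl
  have htrim_v : v.tail.dropLast = wL.dropLast := rfl
  have htrim_u2 : u''.tail.dropLast = wR.tail := by
    have h1 : u''.tail = wR.tail ++ [x2] := by
      rw [hu2_def]
      obtain ⟨a, wR', rfl⟩ := List.exists_cons_of_ne_nil hwRne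
      rfl
    rw [h1, List.dropLast_concat]
  have htrim_v2 : v''.tail.dropLast = wR.tail := by
    have h1 : v''.tail = wR.tail ++ [y2] := by
      rw [hv2_def]
      obtain ⟨a, wR', rfl⟩ := List.exists_cons_of_ne_nil hwRne
      rfl
    rw [h1, List.dropLast_concat]
  have F1 : ¬ KAbEqE ((k + 1 : ℕ) : ℕ∞) u v := kab_ne_of_head_ne hxy1 hK2
  have F2 : ¬ KAbEqE ((k + 1 : ℕ) : ℕ∞) u'' v'' := kab_ne_of_last_ne hxy2 hK2
  have hhead2 : u''.head? = v''.head? := by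
    rw [hu2_def, hv2_def, List.head?_append_of_ne_nil _ hwRne,
      List.head?_append_of_ne_nil _ hwRne]
  -- F3-type facts
  have F3 : ∀ a b a' b' : List A,
      (a = u ∧ a' = v ∨ a = v ∧ a' = u) → (b = u'' ∧ b' = v'' ∨ b = v'' ∧ b' = u'') →
      ¬ (KAbEqE ((k + 1 : ℕ) : ℕ∞) a b ∧ KAbEqE ((k + 1 : ℕ) : ℕ∞) a' b') := by
    rintro a b a' b' h1 h2 ⟨hab, hab'⟩
    have hane : a ≠ [] := by rcases h1 with ⟨rfl, -⟩ | ⟨rfl, -⟩ <;> simp [hu_def, hv_def]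
    have ha'ne : a' ≠ [] := by rcases h1 with ⟨-, rfl⟩ | ⟨-, rfl⟩ <;> simp [hu_def, hv_def]
    have hbne : b ≠ [] := by
      rcases h2 with ⟨rfl, -⟩ | ⟨rfl, -⟩ <;> simp [hu2_def, hv2_def]
    have hb'ne : b' ≠ [] := by
      rcases h2 with ⟨-, rfl⟩ | ⟨-, rfl⟩ <;> simp [hu2_def, hv2_def]
    have e1 : a.head? = b.head? := kab_head_eq hab hK2 hane hbne
    have e2 : a'.head? = b'.head? := kab_head_eq hab' hK2 ha'ne hb'ne
    have e3 : b.head? = b'.head? := by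
      rcases h2 with ⟨rfl, rfl⟩ | ⟨rfl, rfl⟩
      · exact hhead2
      · exact hhead2.symm
    have e4 : a.head? = a'.head? := by rw [e1, e3, ← e2]
    have e5 : u.head? ≠ v.head? := by
      rw [hu_def, hv_def]
      simp [hxy1]
    rcases h1 with ⟨rfl, rfl⟩ | ⟨rfl, rfl⟩
    · exact e5 e4
    · exact e5 e4.symm
  -- freshness
  have fresh_or : ∀ s s' : List A, s.length = n + 2 → s'.length = n + 2 →
      s.tail.dropLast = s'.tail.dropLast → ¬ KAbEqE ((k + 1 : ℕ) : ℕ∞) s s' →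
      (∀ w ∈ L, ¬ KAbEqE ((k + 1 : ℕ) : ℕ∞) s (E w)) ∨
      (∀ w ∈ L, ¬ KAbEqE ((k + 1 : ℕ) : ℕ∞) s' (E w)) := by
    intro s s' hsl hs'l htr hne
    by_contra hcon
    push_neg at hcon
    obtain ⟨⟨w1, hw1, he1⟩, ⟨w2, hw2, he2⟩⟩ := hcon
    have t1 : KAbEqE (k : ℕ∞) s.tail.dropLast w1 := by
      have := kab_trim he1 hsl (hElen w1 hw1) (by omega)
      rw [hEtrim w1 hw1] at this
      exact this
    have t2 : KAbEqE (k : ℕ∞) s'.tail.dropLast w2 := by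
      have := kab_trim he2 hs'l (hElen w2 hw2) (by omega)
      rw [hEtrim w2 hw2] at this
      exact this
    rw [htr] at t1
    have t3 : KAbEqE (k : ℕ∞) w1 w2 := kab_trans (kab_symm t1) t2
    have hw12 : w1 = w2 := by
      by_contra hne12
      exact hpw w1 hw1 w2 hw2 hne12 t3
    subst hw12
    exact hne (kab_trans he1 (kab_symm he2))
  -- the mixed selection
  have sel : ∀ a a' b b' : List A,
      (a = u ∧ a' = v ∨ a = v ∧ a' = u) → (b = u'' ∧ b' = v'' ∨ b = v'' ∧ b' = u'') →
      (∃ w ∈ L, KAbEqE ((k + 1 : ℕ) : ℕ∞) a' (E w)) →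
      (∃ w ∈ L, KAbEqE ((k + 1 : ℕ) : ℕ∞) b' (E w)) →
      ¬ KAbEqE ((k + 1 : ℕ) : ℕ∞) a b := by
    rintro a a' b b' h1 h2 ⟨w1, hw1, he1⟩ ⟨w2, hw2, he2⟩ hab
    refine F3 a b a' b' h1 h2 ⟨hab, ?_⟩
    -- show a' ~ b'
    have hal : a.length = n + 2 := by rcases h1 with ⟨rfl, -⟩ | ⟨rfl, -⟩ <;> assumption
    have ha'l : a'.length = n + 2 := by rcases h1 with ⟨-, rfl⟩ | ⟨-, rfl⟩ <;> assumption
    have hbl : b.length = n + 2 := by rcases h2 with ⟨rfl, -⟩ | ⟨rfl, -⟩ <;> assumption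
    have hb'l : b'.length = n + 2 := by rcases h2 with ⟨-, rfl⟩ | ⟨-, rfl⟩ <;> assumption
    have htra : a.tail.dropLast = a'.tail.dropLast := by
      rcases h1 with ⟨rfl, rfl⟩ | ⟨rfl, rfl⟩ <;> rw [htrim_u, htrim_v]
    have htrb : b.tail.dropLast = b'.tail.dropLast := by
      rcases h2 with ⟨rfl, rfl⟩ | ⟨rfl, rfl⟩ <;> rw [htrim_u2, htrim_v2]
    have t1 : KAbEqE (k : ℕ∞) a'.tail.dropLast w1 := by
      have := kab_trim he1 ha'l (hElen w1 hw1) (by omega)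
      rw [hEtrim w1 hw1] at this
      exact this
    have t2 : KAbEqE (k : ℕ∞) b'.tail.dropLast w2 := by
      have := kab_trim he2 hb'l (hElen w2 hw2) (by omega)
      rw [hEtrim w2 hw2] at this
      exact this
    have t0 : KAbEqE (k : ℕ∞) a.tail.dropLast b.tail.dropLast :=
      kab_trim hab hal hbl (by omega)
    rw [htra, htrb] at t0
    have t3 : KAbEqE (k : ℕ∞) w1 w2 :=
      kab_trans (kab_symm t1) (kab_trans t0 t2)
    have hw12 : w1 = w2 := by
      by_contra hne12
      exact hpw w1 hw1 w2 hw2 hne12 t3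
    subst hw12
    exact kab_trans he1 (kab_symm he2)
  -- choose the two fresh elements
  have choice : ∃ s₁ s₂ : List A,
      s₁.length = n + 2 ∧ s₂.length = n + 2 ∧ IsRec ω s₁ ∧ IsRec ω s₂ ∧
      ¬ KAbEqE ((k + 1 : ℕ) : ℕ∞) s₁ s₂ ∧
      (∀ w ∈ L, ¬ KAbEqE ((k + 1 : ℕ) : ℕ∞) s₁ (E w)) ∧
      (∀ w ∈ L, ¬ KAbEqE ((k + 1 : ℕ) : ℕ∞) s₂ (E w)) := by
    have horL := fresh_or u v hulen hvlen (by rw [htrim_u, htrim_v]) F1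
    have horR := fresh_or u'' v'' hu2len hv2len (by rw [htrim_u2, htrim_v2]) F2
    by_cases fu : ∀ w ∈ L, ¬ KAbEqE ((k + 1 : ℕ) : ℕ∞) u (E w)
    · by_cases fv : ∀ w ∈ L, ¬ KAbEqE ((k + 1 : ℕ) : ℕ∞) v (E w)
      · exact ⟨u, v, hulen, hvlen, hrx1, hry1, F1, fu, fv⟩
      · push_neg at fv
        by_cases fu2 : ∀ w ∈ L, ¬ KAbEqE ((k + 1 : ℕ) : ℕ∞) u'' (E w)
        · by_cases fv2 : ∀ w ∈ L, ¬ KAbEqE ((k + 1 : ℕ) : ℕ∞) v'' (E w)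
          · exact ⟨u'', v'', hu2len, hv2len, hrx2, hry2, F2, fu2, fv2⟩
          · push_neg at fv2
            exact ⟨u, u'', hulen, hu2len, hrx1, hrx2,
              sel u v u'' v'' (Or.inl ⟨rfl, rfl⟩) (Or.inl ⟨rfl, rfl⟩) fv fv2, fu, fu2⟩
        · have fv2 := horR.resolve_left fu2
          push_neg at fu2
          exact ⟨u, v'', hulen, hv2len, hrx1, hry2,
            sel u v v'' u'' (Or.inl ⟨rfl, rfl⟩) (Or.inr ⟨rfl, rfl⟩) fv fu2, fu, fv2⟩
    · have fv := horL.resolve_left fu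
      push_neg at fu
      by_cases fu2 : ∀ w ∈ L, ¬ KAbEqE ((k + 1 : ℕ) : ℕ∞) u'' (E w)
      · by_cases fv2 : ∀ w ∈ L, ¬ KAbEqE ((k + 1 : ℕ) : ℕ∞) v'' (E w)
        · exact ⟨u'', v'', hu2len, hv2len, hrx2, hry2, F2, fu2, fv2⟩
        · push_neg at fv2
          exact ⟨v, u'', hvlen, hu2len, hry1, hrx2,
            sel v u u'' v'' (Or.inr ⟨rfl, rfl⟩) (Or.inl ⟨rfl, rfl⟩) fu fv2, fv, fu2⟩
      · have fv2 := horR.resolve_left fu2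
        push_neg at fu2
        exact ⟨v, v'', hvlen, hv2len, hry1, hry2,
          sel v u v'' u'' (Or.inr ⟨rfl, rfl⟩) (Or.inr ⟨rfl, rfl⟩) fu fu2, fv, fv2⟩
  obtain ⟨s₁, s₂, hl1, hl2, hr1, hr2, hne12, hf1, hf2⟩ := choice
  have hs2notL' : s₂ ∉ L' := by
    intro hmem'
    obtain ⟨w, hw, rfl⟩ := Finset.mem_image.mp hmem'
    exact hf2 w hw (fun _ _ _ => rfl)
  have hs1notL' : s₁ ∉ L' := by
    intro hmem'
    obtain ⟨w, hw, rfl⟩ := Finset.mem_image.mp hmem'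
    exact hf1 w hw (fun _ _ _ => rfl)
  have hs1ne2 : s₁ ≠ s₂ := by rintro rfl; exact hne12 (fun _ _ _ => rfl)
  refine ⟨insert s₁ (insert s₂ L'), ?_, ?_, ?_⟩
  · rw [Finset.card_insert_of_notMem (by simp [hs1ne2, hs1notL']),
      Finset.card_insert_of_notMem hs2notL', hcard']
  · intro w hw
    rcases Finset.mem_insert.mp hw with rfl | hw
    · exact ⟨hl1, hr1⟩
    · rcases Finset.mem_insert.mp hw with rfl | hw
      · exact ⟨hl2, hr2⟩
      · obtain ⟨w0, hw0, rfl⟩ := Finset.mem_image.mp hw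
        exact ⟨hElen w0 hw0, hErec w0 hw0⟩
  · intro a ha b hb hab
    rcases Finset.mem_insert.mp ha with rfl | ha
    · rcases Finset.mem_insert.mp hb with rfl | hb
      · exact absurd rfl hab
      · rcases Finset.mem_insert.mp hb with rfl | hb
        · exact hne12
        · obtain ⟨w0, hw0, rfl⟩ := Finset.mem_image.mp hb
          exact hf1 w0 hw0
    · rcases Finset.mem_insert.mp ha with rfl | ha
      · rcases Finset.mem_insert.mp hb with rfl | hb
        · exact fun h => hne12 (kab_symm h)
        · rcases Finset.mem_insert.mp hb with rfl | hb
          · exact absurd rfl hab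
          · obtain ⟨w0, hw0, rfl⟩ := Finset.mem_image.mp hb
            exact hf2 w0 hw0
      · obtain ⟨w0, hw0, rfl⟩ := Finset.mem_image.mp ha
        rcases Finset.mem_insert.mp hb with rfl | hb
        · exact fun h => hf1 w0 hw0 (kab_symm h)
        · rcases Finset.mem_insert.mp hb with rfl | hb
          · exact fun h => hf2 w0 hw0 (kab_symm h)
          · obtain ⟨w1, hw1, rfl⟩ := Finset.mem_image.mp hb
            intro h
            have t := kab_trim h (hElen w0 hw0) (hElen w1 hw1) (by omega)
            rw [hEtrim w0 hw0, hEtrim w1 hw1] at t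
            have hw01 : w0 ≠ w1 := fun hh => hab (by rw [hh])
            exact hpw w0 hw0 w1 hw1 hw01 t


theorem main_spread (hUP : ¬ UltimatelyPeriodic ω) :
    ∀ k, 1 ≤ k → ∀ n, Spread ω k n (min (n + 1) (2 * k)) := by
  intro k
  induction k with
  | zero => omega
  | succ k ih =>
    intro _ n
    rcases Nat.eq_zero_or_pos k with rfl | hk1
    · cases n with
      | zero =>
        have h0 : min (0 + 1) (2 * (0 + 1)) = 1 := by omega
        rw [h0]
        exact spread_zero ω 1
      | succ n =>
        have h0 : min (n + 1 + 1) (2 * (0 + 1)) = 2 := by omega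
        rw [h0]
        obtain ⟨u, v, hu, hv, hru, hrv, hne⟩ := abelian_pair ω hUP (n := n + 1) (by omega)
        apply spread_two ω hu hv hru hrv
        intro hcon
        apply hne
        have hcast : ((0 + 1 : ℕ) : ℕ∞) = (1 : ℕ∞) := by norm_num
        rw [hcast] at hcon
        exact hcon
    · match n with
      | 0 =>
        have h0 : min (0 + 1) (2 * (k + 1)) = 1 := by omega
        rw [h0]
        exact spread_zero ω (k + 1)
      | 1 =>
        have h0 : min (1 + 1) (2 * (k + 1)) = 2 := by omega
        rw [h0]
        exact spread_one ω hUP (by omega)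
      | (n + 2) =>
        have hstep := spread_step ω hUP hk1 (ih hk1 n)
        have harith : min (n + 1) (2 * k) + 2 = min (n + 2 + 1) (2 * (k + 1)) := by omega
        rw [← harith]
        exact hstep

theorem spread_le_complexity {k' : ℕ} {K : ℕ∞} (hk : (k' : ℕ∞) ≤ K) {n c : ℕ}
    (hsp : Spread ω k' n c) : c ≤ kabComplexityE ω K n := by
  classical
  obtain ⟨L, hcard, hmem, hpw⟩ := hsp
  haveI hfin1 : Finite {l : List A // l.length = n} := Set.Finite.to_subtype (finite_len n)
  haveI hfin2 : Finite {u : List A // u.length = n ∧ IsFactorOf u ω} := by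
    apply Finite.of_injective
      (fun u : {u : List A // u.length = n ∧ IsFactorOf u ω} =>
        (⟨u.1, u.2.1⟩ : {l : List A // l.length = n}))
    intro a b hab
    have hab' : (⟨a.1, a.2.1⟩ : {l : List A // l.length = n}) = ⟨b.1, b.2.1⟩ := hab
    have hv : a.1 = b.1 := by
      have := congrArg (fun t : {l : List A // l.length = n} => t.val) hab'
      simpa using this
    exact Subtype.ext hv
  haveI : Finite (Quotient (factorSetoidE ω K n)) := Quotient.finite _
  have hinj : Function.Injective (fun x : {u : List A // u ∈ L} =>
      (Quotient.mk (factorSetoidE ω K n)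
        ⟨x.1, (hmem x.1 x.2).1, IsRec.isFactorOf ω ((hmem x.1 x.2).2)⟩)) := by
    intro a b hab
    by_contra hne
    have hval : a.1 ≠ b.1 := fun hh => hne (Subtype.ext hh)
    have hq := Quotient.exact hab
    exact hpw a.1 a.2 b.1 b.2 hval (kab_coarse hk hq)
  have h1 : c = Nat.card {u : List A // u ∈ L} := by
    rw [Nat.card_eq_fintype_card, Fintype.card_coe, hcard]
  rw [h1]
  exact Nat.card_le_card_of_injective _ hinj




end fin2
end Stmt13

theorem stmt13 {A : Type*} [Fintype A] [DecidableEq A] (ω : ℕ → A) (k : ℕ∞) (hk : 1 ≤ k)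
    (n₀ : ℕ) (hn₀ : 1 ≤ n₀) (h : kabComplexityE ω k n₀ < qAux k n₀) :
    UltimatelyPeriodic ω := by
  by_contra hUP
  induction k using ENat.recTopCoe with
  | top =>
    have hsp := Stmt13.main_spread ω hUP n₀ (by omega) n₀
    have hle := Stmt13.spread_le_complexity ω (le_top : ((n₀ : ℕ) : ℕ∞) ≤ ⊤) hsp
    have hq : qAux ⊤ n₀ = n₀ + 1 := by
      unfold qAux
      rw [if_pos]
      have h2 : (2 : ℕ∞) * ⊤ = ⊤ := by
        apply ENat.mul_top
        norm_num
      rw [h2]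
      exact WithTop.coe_lt_top n₀
    have hmin : min (n₀ + 1) (2 * n₀) = n₀ + 1 := by omega
    rw [hmin] at hle
    omega
  | coe m =>
    have hm : 1 ≤ m := by exact_mod_cast hk
    have hsp := Stmt13.main_spread ω hUP m hm n₀
    have hle := Stmt13.spread_le_complexity ω (le_refl ((m : ℕ) : ℕ∞)) hsp
    have hq : qAux (m : ℕ∞) n₀ = min (n₀ + 1) (2 * m) := by
      unfold qAux
      have h2 : (2 : ℕ∞) * (m : ℕ∞) = ((2 * m : ℕ) : ℕ∞) := by push_cast; ring
      rw [h2]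
      by_cases hcase : n₀ < 2 * m
      · rw [if_pos (by exact_mod_cast hcase)]
        omega
      · rw [if_neg (by exact_mod_cast hcase)]
        simp only [ENat.toNat_coe]
        omega
    omega
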